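/- For every fixed 0 < p < 1 there exists N such that for all n ≥ N, the probability that some vertex of the complete directed graph on n vertices has all its n-1 outgoing edges 'timely' (each directed edge independently timely with probability p) is strictly less than the probability that the undirected Erdős–Rényi graph G(n, p²) is connected, where the latter is lower-bounded by 1 - n(1-p²)^(n-1) and the former equals 1 - (1 - p^(n-1))^n. -/
import Mathlib

open Filter Topology

private lemma aux_tendsto {r : ℝ} (hr0 : 0 ≤ r) (hr1 : r < 1) :
    Tendsto (fun n : ℕ => (n : ℝ) * r ^ (n - 1)) atTop (𝓝 0) := by
  have h1 : Tendsto (fun k : ℕ => ((k : ℝ) + 1) * r ^ k) atTop (𝓝 0) := by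
    have ha := tendsto_pow_const_mul_const_pow_of_lt_one 1 hr0 hr1
    have hb := tendsto_pow_atTop_nhds_zero_of_lt_one hr0 hr1
    have := ha.add hb
    simp only [pow_one, add_zero] at this
    convert this using 2 with k
    ring
  have hcomp : Tendsto (fun n : ℕ => (((n - 1 : ℕ) : ℝ) + 1) * r ^ (n - 1)) atTop (𝓝 0) :=
    h1.comp (tendsto_sub_atTop_nat 1)
  refine hcomp.congr' ?_
  filter_upwards [eventually_ge_atTop 1] with n hn
  congr 1
  have : (n - 1 : ℕ) + 1 = n := Nat.sub_add_cancel hn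
  ring_nf
  rw [Nat.cast_sub hn]
  push_cast
  ring

theorem stmt9 (p : ℝ) (hp0 : 0 < p) (hp1 : p < 1) :
    ∃ N : ℕ, ∀ n ≥ N,
      1 - (1 - p ^ (n - 1)) ^ n < 1 - (n : ℝ) * (1 - p ^ 2) ^ (n - 1) := by
  have hq0 : (0:ℝ) ≤ 1 - p ^ 2 := by nlinarith
  have hq1 : 1 - p ^ 2 < 1 := by nlinarith
  have hA := aux_tendsto hq0 hq1
  have hB := aux_tendsto hp0.le hp1
  have hsum : Tendsto (fun n : ℕ => (n : ℝ) * (1 - p ^ 2) ^ (n - 1) + (n : ℝ) * p ^ (n - 1))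
      atTop (𝓝 0) := by simpa using hA.add hB
  have hev : ∀ᶠ n : ℕ in atTop,
      (n : ℝ) * (1 - p ^ 2) ^ (n - 1) + (n : ℝ) * p ^ (n - 1) < 1 :=
    hsum.eventually_lt_const one_pos
  obtain ⟨N, hN⟩ := (hev.and (eventually_ge_atTop 1)).exists_forall_of_atTop
  refine ⟨N, fun n hn => ?_⟩
  obtain ⟨hlt, hn1⟩ := hN n hn
  -- Bernoulli: 1 - n * p^(n-1) ≤ (1 - p^(n-1))^n
  have hple : p ^ (n - 1) ≤ 1 := pow_le_one₀ hp0.le hp1.le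
  have hbern : 1 + (n : ℝ) * (-(p ^ (n - 1))) ≤ (1 + -(p ^ (n - 1))) ^ n :=
    one_add_mul_le_pow (by linarith) n
  have hbern' : (1:ℝ) - (n:ℝ) * p ^ (n - 1) ≤ (1 - p ^ (n - 1)) ^ n := by
    ring_nf at hbern ⊢
    linarith
  linarith
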